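/- Let R be a GCD domain and W ∈ R with W ≠ 0. Let v₁, v₂, u₁, u₂ ∈ R satisfy u₁·v₁ = W and u₂·v₂ = W. Let a be a gcd of v₁ and v₂ and write v₂ = a·c. Let s be a gcd of the four elements v₁, v₂, u₁, u₂, let t be a gcd of u₁ and v₂, and let w be a gcd of t and c. Then t and s·w are associated: Associated (gcd(u₁, v₂)) (s · gcd(gcd(u₁, v₂), v₂/gcd(v₁, v₂))). By symmetry, writing v₁ = a·b and letting t' be a gcd of u₂ and v₁ and w' a gcd of t' and b, also Associated t' (s·w'). -/

import Mathlib

/-- `d` is a greatest common divisor of `x` and `y`. -/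
def IsGcdOf {R : Type*} [CommMonoidWithZero R] (d x y : R) : Prop :=
  d ∣ x ∧ d ∣ y ∧ ∀ e : R, e ∣ x → e ∣ y → e ∣ d

theorem isGcdOf_assoc {R : Type*} [CommMonoidWithZero R] [GCDMonoid R]
    {d x y : R} (h : IsGcdOf d x y) : Associated d (gcd x y) :=
  associated_of_dvd_dvd (dvd_gcd h.1 h.2.1) (h.2.2 _ (gcd_dvd_left x y) (gcd_dvd_right x y))

theorem aux' {R : Type*} [CommRing R] [IsDomain R] [GCDMonoid R]
    (v₁ v₂ u₁ u₂ a b c s t w : R)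
    (hv₁ : v₁ ≠ 0) (hv₂ : v₂ ≠ 0)
    (heq : u₁ * v₁ = u₂ * v₂)
    (ha : IsGcdOf a v₁ v₂) (hb : v₁ = a * b) (hc : v₂ = a * c)
    (hs : s ∣ v₁ ∧ s ∣ v₂ ∧ s ∣ u₁ ∧ s ∣ u₂ ∧
      ∀ e : R, e ∣ v₁ → e ∣ v₂ → e ∣ u₁ → e ∣ u₂ → e ∣ s)
    (ht : IsGcdOf t u₁ v₂) (hw : IsGcdOf w t c) :
    Associated t (s * w) := by
  have ha0 : a ≠ 0 := fun h => hv₁ (by simp [hb, h])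
  have hc0 : c ≠ 0 := fun h => hv₂ (by simp [hc, h])
  -- b and c are coprime
  have hrp : IsRelPrime b c := by
    intro e heb hec
    have h1 : a * e ∣ v₁ := hb ▸ mul_dvd_mul_left a heb
    have h2 : a * e ∣ v₂ := hc ▸ mul_dvd_mul_left a hec
    have h3 : a * e ∣ a * 1 := by simpa using ha.2.2 _ h1 h2
    exact isUnit_of_dvd_one ((mul_dvd_mul_iff_left ha0).mp h3)
  -- u₁ * b = u₂ * c
  have hub : u₁ * b = u₂ * c := by
    apply mul_left_cancel₀ ha0
    rw [hb, hc] at heq; ring_nf at heq ⊢; linear_combination heq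
  -- c ∣ u₁
  have hcu : c ∣ u₁ := hrp.symm.dvd_of_dvd_mul_right ⟨u₂, by linear_combination hub⟩
  obtain ⟨u₁', hu₁⟩ := hcu
  have hu₂ : u₂ = u₁' * b := by
    apply mul_left_cancel₀ hc0
    rw [hu₁] at hub; ring_nf at hub ⊢; linear_combination -hub
  -- t ∼ c * gcd u₁' a
  have htg : Associated t (c * gcd u₁' a) := by
    have := isGcdOf_assoc ht
    rw [hu₁, hc, mul_comm a c] at this
    exact this.trans (gcd_mul_left' c u₁' a)
  -- w ∼ c
  have hwc : Associated w c := by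
    refine associated_of_dvd_dvd hw.2.1 (hw.2.2 c ?_ dvd_rfl)
    exact ht.2.2 c ⟨u₁', hu₁⟩ (hc ▸ Dvd.intro_left a rfl)
  -- s ∼ gcd u₁' a
  have hsg : Associated s (gcd u₁' a) := by
    refine associated_of_dvd_dvd ?_ ?_
    · have hsa : s ∣ a := ha.2.2 s hs.1 hs.2.1
      have hsu : s ∣ u₁' := by
        have h1 : s ∣ u₁' * c := by rw [mul_comm]; exact hu₁ ▸ hs.2.2.1
        have h2 : s ∣ u₁' * b := hu₂ ▸ hs.2.2.2.1
        have h3 : s ∣ gcd (u₁' * c) (u₁' * b) := dvd_gcd h1 h2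
        have h4 : s ∣ u₁' * gcd c b := h3.trans (gcd_mul_left' u₁' c b).dvd
        have hu : IsUnit (gcd c b) := hrp.symm (gcd_dvd_left c b) (gcd_dvd_right c b)
        exact h4.trans (associated_mul_unit_left u₁' _ hu).dvd
      exact dvd_gcd hsu hsa
    · refine hs.2.2.2.2 _ ?_ ?_ ?_ ?_
      · exact hb ▸ Dvd.dvd.mul_right (gcd_dvd_right u₁' a) b
      · exact hc ▸ Dvd.dvd.mul_right (gcd_dvd_right u₁' a) c
      · exact hu₁ ▸ Dvd.dvd.mul_left (gcd_dvd_left u₁' a) c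
      · exact hu₂ ▸ Dvd.dvd.mul_right (gcd_dvd_left u₁' a) b
  have hfin : Associated (s * w) (c * gcd u₁' a) := by
    rw [mul_comm c]; exact hsg.mul_mul hwc
  exact htg.trans hfin.symm

/-- Let `R` be a GCD domain, `W ≠ 0`, `u₁*v₁ = W`, `u₂*v₂ = W`. Let `a` be a
gcd of `v₁, v₂`, write `v₁ = a*b`, `v₂ = a*c`, let `s` be a gcd of `v₁, v₂, u₁, u₂`, `t` a gcd
of `u₁, v₂`, `w` a gcd of `t, c`, `t'` a gcd of `u₂, v₁`, `w'` a gcd of `t', b`. Then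
`(u₁,v₂) ∼ s·((u₁,v₂), v₂/(v₁,v₂))` and symmetrically `(u₂,v₁) ∼ s·((u₂,v₁), v₁/(v₁,v₂))`,
i.e. `t ∼ s*w` and `t' ∼ s*w'`. -/
theorem gcd_s_identity
    {R : Type*} [CommRing R] [IsDomain R] [GCDMonoid R]
    (W v₁ v₂ u₁ u₂ a b c s t w t' w' : R) (hW : W ≠ 0)
    (h₁ : u₁ * v₁ = W) (h₂ : u₂ * v₂ = W)
    (ha : IsGcdOf a v₁ v₂) (hb : v₁ = a * b) (hc : v₂ = a * c)
    (hs : s ∣ v₁ ∧ s ∣ v₂ ∧ s ∣ u₁ ∧ s ∣ u₂ ∧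
      ∀ e : R, e ∣ v₁ → e ∣ v₂ → e ∣ u₁ → e ∣ u₂ → e ∣ s)
    (ht : IsGcdOf t u₁ v₂) (hw : IsGcdOf w t c)
    (ht' : IsGcdOf t' u₂ v₁) (hw' : IsGcdOf w' t' b) :
    Associated t (s * w) ∧ Associated t' (s * w') := by
  have hv₁ : v₁ ≠ 0 := fun h => hW (by rw [← h₁, h, mul_zero])
  have hv₂ : v₂ ≠ 0 := fun h => hW (by rw [← h₂, h, mul_zero])
  have heq : u₁ * v₁ = u₂ * v₂ := h₁.trans h₂.symm
  constructor
  · exact aux' v₁ v₂ u₁ u₂ a b c s t w hv₁ hv₂ heq ha hb hc hs ht hw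
  · exact aux' v₂ v₁ u₂ u₁ a c b s t' w' hv₂ hv₁ heq.symm
      ⟨ha.2.1, ha.1, fun e h1 h2 => ha.2.2 e h2 h1⟩ hc hb
      ⟨hs.2.1, hs.1, hs.2.2.2.1, hs.2.2.1,
        fun e e1 e2 e3 e4 => hs.2.2.2.2 e e2 e1 e4 e3⟩ ht' hw'
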